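/- For every λ ∈ ℝ and every measurable h : ℝ^d → ℝ (with all integrals finite), the transformed Bregman risk satisfies R_CDF(h) = E[φ(F_Y(Y))] − E[(λ − F_Y(h(X)))·φ'(F_Y(h(X))) + φ(F_Y(h(X)))] − ((1 − λ)/2)·E[φ'(F_Y(h(X⁺)))] + (λ/2)·E[φ'(F_Y(h(X⁻)))]; in particular, the empirical estimator R̂_CDF built by replacing the three expectations with sample averages over unlabeled data and pairwise comparison data is an unbiased estimator of R_CDF for every λ. -/

import Mathlib

open MeasureTheory ProbabilityTheory

/-- For every `λ ∈ ℝ` and measurable `h` (all integrals finite), the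
transformed Bregman risk `R_CDF(h) = E[d_φ(F_Y(Y), F_Y(h(X)))]` equals
`E[φ(F_Y(Y))] - E[(λ - F_Y(h(X))) φ'(F_Y(h(X))) + φ(F_Y(h(X)))]
  - ((1-λ)/2) E[φ'(F_Y(h(X⁺)))] + (λ/2) E[φ'(F_Y(h(X⁻)))]`,
so the corresponding sample-average estimator is unbiased for every `λ`. -/
lemma key_aux {α : Type*} [MeasurableSpace α] {Ω : Type*} [MeasurableSpace Ω]
    {μ : Measure Ω} [IsProbabilityMeasure μ]
    {X X' : Ω → α} {Y Y' : Ω → ℝ}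
    (hX : Measurable X) (hY : Measurable Y) (hX' : Measurable X') (hY' : Measurable Y')
    (hindep : IndepFun (fun ω => (X ω, Y ω)) (fun ω => (X' ω, Y' ω)) μ)
    (hident : μ.map (fun ω => (X ω, Y ω)) = μ.map (fun ω => (X' ω, Y' ω)))
    (hatomless : ∀ t : ℝ, μ {ω | Y ω = t} = 0)
    (F : ℝ → ℝ) (hFdef : ∀ t, F t = (μ {ω | Y ω ≤ t}).toReal)
    (g : α → ℝ) (hg : Measurable g)
    (hint : Integrable (fun ω => if Y' ω ≤ Y ω then g (X ω) else g (X' ω)) μ) :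
    ∫ ω, (if Y' ω ≤ Y ω then g (X ω) else g (X' ω)) ∂μ
      = (∫ ω, F (Y ω) * g (X ω) ∂μ) + ∫ ω, F (Y ω) * g (X ω) ∂μ := by
  classical
  have hXY : Measurable fun ω => (X ω, Y ω) := hX.prodMk hY
  have hXY' : Measurable fun ω => (X' ω, Y' ω) := hX'.prodMk hY'
  set κ : Measure (α × ℝ) := μ.map (fun ω => (X ω, Y ω)) with hκ
  have hZ : Measurable fun ω => ((X ω, Y ω), (X' ω, Y' ω)) := hXY.prodMk hXY'
  have hmap : μ.map (fun ω => ((X ω, Y ω), (X' ω, Y' ω))) = κ.prod κ := by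
    rw [(indepFun_iff_map_prod_eq_prod_map_map hXY.aemeasurable hXY'.aemeasurable).mp hindep,
      ← hident]
  have hκ_le : ∀ t : ℝ, (κ {p : α × ℝ | p.2 ≤ t}).toReal = F t := by
    intro t
    rw [hκ, Measure.map_apply hXY (measurableSet_le measurable_snd measurable_const), hFdef]
    rfl
  have hκ_lt : ∀ t : ℝ, (κ {p : α × ℝ | p.2 < t}).toReal = F t := by
    intro t
    rw [hκ, Measure.map_apply hXY (measurableSet_lt measurable_snd measurable_const), hFdef]
    congr 1
    show μ {ω | Y ω < t} = μ {ω | Y ω ≤ t}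
    refine le_antisymm (measure_mono fun ω hw => show Y ω ≤ t from le_of_lt hw) ?_
    calc μ {ω | Y ω ≤ t} ≤ μ ({ω | Y ω < t} ∪ {ω | Y ω = t}) :=
          measure_mono fun ω hw => show Y ω < t ∨ Y ω = t from lt_or_eq_of_le hw
      _ ≤ μ {ω | Y ω < t} + μ {ω | Y ω = t} := measure_union_le _ _
      _ = μ {ω | Y ω < t} := by rw [hatomless t, add_zero]
  set f : (α × ℝ) × (α × ℝ) → ℝ :=
    fun r => if r.2.2 ≤ r.1.2 then g r.1.1 else g r.2.1 with hf
  have hS : MeasurableSet {r : (α × ℝ) × (α × ℝ) | r.2.2 ≤ r.1.2} :=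
    measurableSet_le (measurable_snd.comp measurable_snd) (measurable_snd.comp measurable_fst)
  have hf_meas : Measurable f :=
    Measurable.ite hS (hg.comp (measurable_fst.comp measurable_fst))
      (hg.comp (measurable_fst.comp measurable_snd))
  have hfZ : (fun ω => f ((X ω, Y ω), (X' ω, Y' ω)))
      = fun ω => if Y' ω ≤ Y ω then g (X ω) else g (X' ω) := rfl
  have hf_int : Integrable f (κ.prod κ) := by
    rw [← hmap, integrable_map_measure hf_meas.aestronglyMeasurable hZ.aemeasurable]
    exact hint
  have hP : ∫ ω, (if Y' ω ≤ Y ω then g (X ω) else g (X' ω)) ∂μ = ∫ r, f r ∂(κ.prod κ) := by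
    rw [← hmap, integral_map hZ.aemeasurable hf_meas.aestronglyMeasurable]
  set f₁ : (α × ℝ) × (α × ℝ) → ℝ := fun r => if r.2.2 ≤ r.1.2 then g r.1.1 else 0 with hf₁
  set f₂ : (α × ℝ) × (α × ℝ) → ℝ := fun r => if r.2.2 ≤ r.1.2 then 0 else g r.2.1 with hf₂
  have hf₁_meas : Measurable f₁ :=
    Measurable.ite hS (hg.comp (measurable_fst.comp measurable_fst)) measurable_const
  have hf₂_meas : Measurable f₂ :=
    Measurable.ite hS measurable_const (hg.comp (measurable_fst.comp measurable_snd))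
  have hsplit : ∀ r, f r = f₁ r + f₂ r := by
    intro r; simp only [hf, hf₁, hf₂]; split_ifs <;> ring
  have hf₁_int : Integrable f₁ (κ.prod κ) := by
    refine hf_int.mono hf₁_meas.aestronglyMeasurable (ae_of_all _ fun r => ?_)
    simp only [hf, hf₁, Real.norm_eq_abs]
    split_ifs <;> simp [abs_nonneg]
  have hf₂_int : Integrable f₂ (κ.prod κ) := by
    refine hf_int.mono hf₂_meas.aestronglyMeasurable (ae_of_all _ fun r => ?_)
    simp only [hf, hf₂, Real.norm_eq_abs]
    split_ifs <;> simp [abs_nonneg]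
  have hA : ∫ p : α × ℝ, F p.2 * g p.1 ∂κ = ∫ ω, F (Y ω) * g (X ω) ∂μ := by
    rw [hκ, integral_map hXY.aemeasurable]
    have hFm : Measurable F := by
      have : Monotone F := by
        intro a b hab
        rw [hFdef, hFdef]
        exact ENNReal.toReal_mono (measure_ne_top μ _)
          (measure_mono fun ω hw => le_trans hw hab)
      exact this.measurable
    exact ((hFm.comp measurable_snd).mul (hg.comp measurable_fst)).aestronglyMeasurable
  have h1 : ∫ r, f₁ r ∂(κ.prod κ) = ∫ p : α × ℝ, F p.2 * g p.1 ∂κ := by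
    rw [integral_prod _ hf₁_int]
    refine integral_congr_ae (ae_of_all _ fun p => ?_)
    have e : ∀ q : α × ℝ, f₁ (p, q)
        = Set.indicator {q : α × ℝ | q.2 ≤ p.2} (fun _ => g p.1) q := by
      intro q
      rw [Set.indicator_apply]
      rfl
    simp_rw [e]
    rw [integral_indicator_const _ (measurableSet_le measurable_snd measurable_const),
      smul_eq_mul, Measure.real_def, hκ_le]
  have h2 : ∫ r, f₂ r ∂(κ.prod κ) = ∫ q : α × ℝ, F q.2 * g q.1 ∂κ := by
    rw [integral_prod_symm _ hf₂_int]
    refine integral_congr_ae (ae_of_all _ fun q => ?_)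
    have e : ∀ p : α × ℝ, f₂ (p, q)
        = Set.indicator {p : α × ℝ | p.2 < q.2} (fun _ => g q.1) p := by
      intro p
      rw [Set.indicator_apply]
      by_cases hpq : q.2 ≤ p.2
      · simp only [hf₂, if_pos hpq, Set.mem_setOf_eq, not_lt.mpr hpq, if_neg]
        simp [not_lt.mpr hpq]
      · simp [hf₂, hpq, lt_of_not_ge hpq]
    simp_rw [e]
    rw [integral_indicator_const _ (measurableSet_lt measurable_snd measurable_const),
      smul_eq_mul, Measure.real_def, hκ_lt]
  rw [hP, integral_congr_ae (ae_of_all _ hsplit), integral_add hf₁_int hf₂_int, h1, h2, hA]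

theorem stmt_14
    {Ω : Type*} [MeasurableSpace Ω] {μ : Measure Ω} [IsProbabilityMeasure μ]
    {d : ℕ} {X X' : Ω → (Fin d → ℝ)} {Y Y' : Ω → ℝ}
    (hX : Measurable X) (hY : Measurable Y) (hX' : Measurable X') (hY' : Measurable Y')
    (hindep : IndepFun (fun ω => (X ω, Y ω)) (fun ω => (X' ω, Y' ω)) μ)
    (hident : μ.map (fun ω => (X ω, Y ω)) = μ.map (fun ω => (X' ω, Y' ω)))
    (hatomless : ∀ t : ℝ, μ {ω | Y ω = t} = 0)
    (φ : ℝ → ℝ) (hφdiff : Differentiable ℝ φ) (hφconv : ConvexOn ℝ Set.univ φ)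
    (h : (Fin d → ℝ) → ℝ) (hh : Measurable h)
    (F : ℝ → ℝ) (hFdef : ∀ t, F t = (μ {ω | Y ω ≤ t}).toReal)
    (i1 : Integrable (fun ω => φ (F (Y ω))) μ)
    (i2 : Integrable (fun ω => φ (F (h (X ω)))) μ)
    (i3 : Integrable (fun ω => F (h (X ω)) * deriv φ (F (h (X ω)))) μ)
    (i4 : Integrable (fun ω => F (Y ω) * deriv φ (F (h (X ω)))) μ)
    (i5 : Integrable (fun ω => deriv φ (F (h (X ω)))) μ)
    (i6 : Integrable (fun ω => deriv φ (F (h (if Y' ω ≤ Y ω then X ω else X' ω)))) μ)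
    (i7 : Integrable (fun ω => deriv φ (F (h (if Y' ω ≤ Y ω then X' ω else X ω)))) μ)
    (lam : ℝ) :
    ∫ ω, (φ (F (Y ω)) - φ (F (h (X ω)))
        - (F (Y ω) - F (h (X ω))) * deriv φ (F (h (X ω)))) ∂μ
      = (∫ ω, φ (F (Y ω)) ∂μ)
        - (∫ ω, ((lam - F (h (X ω))) * deriv φ (F (h (X ω))) + φ (F (h (X ω)))) ∂μ)
        - ((1 - lam) / 2)
            * (∫ ω, deriv φ (F (h (if Y' ω ≤ Y ω then X ω else X' ω))) ∂μ)
        + (lam / 2) * ∫ ω, deriv φ (F (h (if Y' ω ≤ Y ω then X' ω else X ω))) ∂μ := by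
  classical
  have hF_meas : Measurable F := by
    have : Monotone F := by
      intro a b hab
      rw [hFdef, hFdef]
      exact ENNReal.toReal_mono (measure_ne_top μ _)
        (measure_mono fun ω hw => show Y ω ≤ b from le_trans hw hab)
    exact this.measurable
  set g : (Fin d → ℝ) → ℝ := fun x => deriv φ (F (h x)) with hg
  have hg_meas : Measurable g := (measurable_deriv φ).comp (hF_meas.comp hh)
  -- rewrite the comparison integrands
  have e6 : (fun ω => deriv φ (F (h (if Y' ω ≤ Y ω then X ω else X' ω))))
      = fun ω => if Y' ω ≤ Y ω then g (X ω) else g (X' ω) := by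
    funext ω; rw [apply_ite (fun x => deriv φ (F (h x)))]
  have e7 : (fun ω => deriv φ (F (h (if Y' ω ≤ Y ω then X' ω else X ω))))
      = fun ω => if Y' ω ≤ Y ω then g (X' ω) else g (X ω) := by
    funext ω; rw [apply_ite (fun x => deriv φ (F (h x)))]
  have i6' : Integrable (fun ω => if Y' ω ≤ Y ω then g (X ω) else g (X' ω)) μ := e6 ▸ i6
  have i7' : Integrable (fun ω => if Y' ω ≤ Y ω then g (X' ω) else g (X ω)) μ := e7 ▸ i7
  -- key identity for X⁺
  have hP : ∫ ω, (if Y' ω ≤ Y ω then g (X ω) else g (X' ω)) ∂μ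
      = (∫ ω, F (Y ω) * g (X ω) ∂μ) + ∫ ω, F (Y ω) * g (X ω) ∂μ :=
    key_aux hX hY hX' hY' hindep hident hatomless F hFdef g hg_meas i6'
  -- integral over X' equals integral over X
  have hB' : ∫ ω, g (X' ω) ∂μ = ∫ ω, g (X ω) ∂μ := by
    have hXY : Measurable fun ω => (X ω, Y ω) := hX.prodMk hY
    have hXY' : Measurable fun ω => (X' ω, Y' ω) := hX'.prodMk hY'
    have hgm : AEStronglyMeasurable (fun p : (Fin d → ℝ) × ℝ => g p.1)
        (μ.map fun ω => (X ω, Y ω)) := (hg_meas.comp measurable_fst).aestronglyMeasurable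
    have h1 : ∫ ω, g (X ω) ∂μ = ∫ p : (Fin d → ℝ) × ℝ, g p.1 ∂(μ.map fun ω => (X ω, Y ω)) :=
      (integral_map hXY.aemeasurable hgm).symm
    have h2 : ∫ ω, g (X' ω) ∂μ
        = ∫ p : (Fin d → ℝ) × ℝ, g p.1 ∂(μ.map fun ω => (X' ω, Y' ω)) :=
      (integral_map hXY'.aemeasurable (hident ▸ hgm)).symm
    rw [h1, h2, hident]
  have hX'_int : Integrable (fun ω => g (X' ω)) μ := by
    have hsum : Integrable (fun ω => g (X ω) + g (X' ω)) μ := by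
      have := i6'.add i7'
      refine this.congr (ae_of_all _ fun ω => ?_)
      simp only [Pi.add_apply]
      split_ifs <;> ring
    have := hsum.sub i5
    refine this.congr (ae_of_all _ fun ω => ?_)
    simp only [Pi.sub_apply, hg]
    ring
  -- M = 2B - P
  have hM : ∫ ω, (if Y' ω ≤ Y ω then g (X' ω) else g (X ω)) ∂μ
      = (∫ ω, g (X ω) ∂μ) + (∫ ω, g (X ω) ∂μ)
        - ∫ ω, (if Y' ω ≤ Y ω then g (X ω) else g (X' ω)) ∂μ := by
    have hsum : (∫ ω, (if Y' ω ≤ Y ω then g (X ω) else g (X' ω)) ∂μ)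
        + ∫ ω, (if Y' ω ≤ Y ω then g (X' ω) else g (X ω)) ∂μ
        = (∫ ω, g (X ω) ∂μ) + ∫ ω, g (X' ω) ∂μ := by
      rw [← integral_add i6' i7', ← integral_add i5 hX'_int]
      refine integral_congr_ae (ae_of_all _ fun ω => ?_)
      simp only [hg]
      split_ifs <;> ring
    rw [← hB'] at hsum ⊢
    linarith [hsum]
  -- expand both sides linearly
  have j12 : Integrable (fun ω => φ (F (Y ω)) - φ (F (h (X ω)))) μ := i1.sub i2
  have j124 : Integrable (fun ω =>
      φ (F (Y ω)) - φ (F (h (X ω))) - F (Y ω) * deriv φ (F (h (X ω)))) μ := j12.sub i4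
  have hL : ∫ ω, (φ (F (Y ω)) - φ (F (h (X ω)))
        - (F (Y ω) - F (h (X ω))) * deriv φ (F (h (X ω)))) ∂μ
      = (∫ ω, φ (F (Y ω)) ∂μ) - (∫ ω, φ (F (h (X ω))) ∂μ)
        - (∫ ω, F (Y ω) * g (X ω) ∂μ) + ∫ ω, F (h (X ω)) * g (X ω) ∂μ := by
    have e : (fun ω => φ (F (Y ω)) - φ (F (h (X ω)))
          - (F (Y ω) - F (h (X ω))) * deriv φ (F (h (X ω))))
        = fun ω => (φ (F (Y ω)) - φ (F (h (X ω))) - F (Y ω) * deriv φ (F (h (X ω))))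
            + F (h (X ω)) * deriv φ (F (h (X ω))) := funext fun ω => by ring
    rw [e, integral_add j124 i3, integral_sub j12 i4, integral_sub i1 i2]
  have j5 : Integrable (fun ω => lam * deriv φ (F (h (X ω)))) μ := i5.const_mul lam
  have j53 : Integrable (fun ω =>
      lam * deriv φ (F (h (X ω))) - F (h (X ω)) * deriv φ (F (h (X ω)))) μ := j5.sub i3
  have hR : ∫ ω, ((lam - F (h (X ω))) * deriv φ (F (h (X ω))) + φ (F (h (X ω)))) ∂μ
      = lam * (∫ ω, g (X ω) ∂μ) - (∫ ω, F (h (X ω)) * g (X ω) ∂μ)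
        + ∫ ω, φ (F (h (X ω))) ∂μ := by
    have e : (fun ω => (lam - F (h (X ω))) * deriv φ (F (h (X ω))) + φ (F (h (X ω))))
        = fun ω => (lam * deriv φ (F (h (X ω))) - F (h (X ω)) * deriv φ (F (h (X ω))))
            + φ (F (h (X ω))) := funext fun ω => by ring
    rw [e, integral_add j53 i2, integral_sub j5 i3, integral_const_mul]
  rw [e6, e7, hL, hR, hP, hM, hP]
  ring
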